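/- (Bayes-decision comparison lemma.) Let μ and ν be probability measures on a measurable space Z, let B be a set of actions, and let ℓ : B × Z → ℝ be a loss function, measurable in z for each action. Suppose b̂ ∈ B minimizes b ↦ ∫ ℓ(b, z) dν(z) over B, b* ∈ B minimizes b ↦ ∫ ℓ(b, z) dμ(z) over B, and sup_{z ∈ Z} |ℓ(b̂, z) − ℓ(b*, z)| ≤ M. Then ∫ ℓ(b̂, z) dμ(z) − ∫ ℓ(b*, z) dμ(z) ≤ M √(2 KL(μ ‖ ν)). -/

import Mathlib

open MeasureTheory Classical

/-- `log t + 1/t - 1 ≥ 0` for `t > 0`. -/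
lemma aux_log_ge {t : ℝ} (ht : 0 < t) : 0 ≤ Real.log t + 1/t - 1 := by
  have h := Real.log_le_sub_one_of_pos (show (0:ℝ) < t⁻¹ by positivity)
  rw [Real.log_inv] at h
  have : -Real.log t ≤ 1/t - 1 := by rw [one_div]; linarith
  linarith

/-- `h t := (t+1) log t - 2(t-1)` has derivative `log t + (t+1)/t - 2` at `t > 0`. -/
lemma hasDerivAt_h {t : ℝ} (ht : 0 < t) :
    HasDerivAt (fun u : ℝ => (u+1)*Real.log u - 2*(u-1))
      (Real.log t + (t+1)*t⁻¹ - 2) t := by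
  have h1 : HasDerivAt (fun u : ℝ => (u+1)*Real.log u)
      (1 * Real.log t + (t+1) * t⁻¹) t :=
    (((hasDerivAt_id t).add_const 1)).mul (Real.hasDerivAt_log ht.ne')
  have h2 : HasDerivAt (fun u : ℝ => 2*(u-1)) 2 t := by
    simpa using ((hasDerivAt_id t).sub_const 1).const_mul 2
  have h3 := h1.sub h2
  simp only [one_mul] at h3
  exact h3

lemma h_mono : MonotoneOn (fun u : ℝ => (u+1)*Real.log u - 2*(u-1)) (Set.Ioi 0) := by
  have hint : interior (Set.Ioi (0:ℝ)) = Set.Ioi 0 := interior_Ioi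
  apply monotoneOn_of_deriv_nonneg (convex_Ioi 0)
  · intro x hx
    exact (hasDerivAt_h hx).continuousAt.continuousWithinAt
  · rw [hint]; intro x hx
    exact (hasDerivAt_h hx).differentiableAt.differentiableWithinAt
  · rw [hint]; intro x hx
    rw [(hasDerivAt_h hx).deriv]
    have hx0 : x ≠ 0 := ne_of_gt hx
    have h0 := aux_log_ge (Set.mem_Ioi.mp hx)
    have : (x+1)*x⁻¹ = 1 + 1/x := by field_simp
    rw [this]; linarith

lemma h_nonneg {t : ℝ} (ht : 1 ≤ t) : 0 ≤ (t+1)*Real.log t - 2*(t-1) := by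
  have := h_mono (by norm_num : (1:ℝ) ∈ Set.Ioi 0)
    (show t ∈ Set.Ioi (0:ℝ) by simp; linarith) ht
  simpa using this

lemma h_nonpos {t : ℝ} (ht0 : 0 < t) (ht : t ≤ 1) : (t+1)*Real.log t - 2*(t-1) ≤ 0 := by
  have := h_mono (show t ∈ Set.Ioi (0:ℝ) from ht0) (by norm_num : (1:ℝ) ∈ Set.Ioi 0) ht
  simpa using this

lemma hasDerivAt_psi {t : ℝ} (ht : 0 < t) :
    HasDerivAt (fun u : ℝ => (2*u+4)*(u*Real.log u - u + 1) - 3*(u-1)^2)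
      (4*((t+1)*Real.log t - 2*(t-1))) t := by
  have h1 : HasDerivAt (fun u : ℝ => u*Real.log u - u + 1) (Real.log t + 1 - 1) t :=
    ((Real.hasDerivAt_mul_log ht.ne').sub (hasDerivAt_id t)).add_const 1
  have h2 : HasDerivAt (fun u : ℝ => 2*u+4) 2 t := by
    simpa using ((hasDerivAt_id t).const_mul 2).add_const 4
  have h3 : HasDerivAt (fun u : ℝ => 3*(u-1)^2) (3*(2*(t-1))) t := by
    simpa using (((hasDerivAt_id t).sub_const 1).pow 2).const_mul 3
  have h4 : HasDerivAt (fun u : ℝ => (2*u+4)*(u*Real.log u - u + 1) - 3*(u-1)^2)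
      (2 * (t * Real.log t - t + 1) + (2 * t + 4) * (Real.log t + 1 - 1) - 3 * (2 * (t - 1))) t :=
    (h2.mul h1).sub h3
  convert h4 using 1
  ring

/-- The key pointwise inequality: `3(t-1)² ≤ (2t+4)(t log t - t + 1)` for `t ≥ 0`. -/
lemma key_ineq {t : ℝ} (ht : 0 ≤ t) :
    3*(t-1)^2 ≤ (2*t+4)*(t*Real.log t - t + 1) := by
  set ψ : ℝ → ℝ := fun u => (2*u+4)*(u*Real.log u - u + 1) - 3*(u-1)^2 with hψ
  have hψ1 : ψ 1 = 0 := by simp [hψ]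
  suffices h : 0 ≤ ψ t by simpa [hψ] using h; 
  rcases eq_or_lt_of_le ht with h0 | ht0
  · simp [hψ, ← h0, Real.log_zero]; norm_num
  rcases le_total 1 t with h1 | h1
  · -- monotone on Ici 1
    have hm : MonotoneOn ψ (Set.Ici 1) := by
      apply monotoneOn_of_deriv_nonneg (convex_Ici 1)
      · intro x hx
        have hx0 : (0:ℝ) < x := lt_of_lt_of_le one_pos hx
        exact (hasDerivAt_psi hx0).continuousAt.continuousWithinAt
      · rw [interior_Ici]; intro x hx
        exact (hasDerivAt_psi (lt_trans one_pos hx)).differentiableAt.differentiableWithinAt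
      · rw [interior_Ici]; intro x hx
        rw [(hasDerivAt_psi (lt_trans one_pos hx)).deriv]
        have := h_nonneg (le_of_lt hx)
        linarith
    have := hm (Set.self_mem_Ici) (show t ∈ Set.Ici (1:ℝ) from h1) h1
    rw [hψ1] at this; exact this
  · -- antitone on Ioc 0 1
    have hm : AntitoneOn ψ (Set.Ioc 0 1) := by
      apply antitoneOn_of_deriv_nonpos (convex_Ioc 0 1)
      · intro x hx
        exact (hasDerivAt_psi hx.1).continuousAt.continuousWithinAt
      · rw [interior_Ioc]; intro x hx
        exact (hasDerivAt_psi hx.1).differentiableAt.differentiableWithinAt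
      · rw [interior_Ioc]; intro x hx
        rw [(hasDerivAt_psi hx.1).deriv]
        have := h_nonpos hx.1 (le_of_lt hx.2)
        linarith
    have := hm (show t ∈ Set.Ioc (0:ℝ) 1 from ⟨ht0, h1⟩)
      (show (1:ℝ) ∈ Set.Ioc (0:ℝ) 1 by norm_num) h1
    rw [hψ1] at this; exact this

/-- `t log t - t + 1 ≥ 0` for `t ≥ 0`. -/
lemma ent_nonneg {t : ℝ} (ht : 0 ≤ t) : 0 ≤ t*Real.log t - t + 1 := by
  have h := key_ineq ht
  nlinarith [sq_nonneg (t-1)]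

lemma pinsker {Z : Type*} [MeasurableSpace Z] (μ ν : Measure Z)
    [IsProbabilityMeasure μ] [IsProbabilityMeasure ν] (hμν : μ ≪ ν)
    (hint : Integrable (fun x => Real.log (μ.rnDeriv ν x).toReal) μ) :
    ∫ x, |(μ.rnDeriv ν x).toReal - 1| ∂ν ≤
      Real.sqrt (2 * ∫ x, Real.log (μ.rnDeriv ν x).toReal ∂μ) := by
  set f : Z → ℝ := fun x => (μ.rnDeriv ν x).toReal with hf_def
  have hf_meas : Measurable f := (Measure.measurable_rnDeriv μ ν).ennreal_toReal
  have hf_nonneg : ∀ x, 0 ≤ f x := fun x => ENNReal.toReal_nonneg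
  have hf_int : Integrable f ν := Measure.integrable_toReal_rnDeriv
  have hf_one : ∫ x, f x ∂ν = 1 := by
    rw [hf_def, Measure.integral_toReal_rnDeriv hμν]; simp
  set k : ℝ := ∫ x, f x * Real.log (f x) ∂ν with hk_def
  have hk_int : Integrable (fun x => f x * Real.log (f x)) ν := by
    have := (integrable_rnDeriv_smul_iff hμν).mpr hint
    simpa [smul_eq_mul] using this
  have hk_eq : ∫ x, Real.log (f x) ∂μ = k := by
    have := integral_rnDeriv_smul hμν (f := fun x => Real.log (f x))
    simpa [smul_eq_mul] using this.symm
  set φ : Z → ℝ := fun x => f x * Real.log (f x) - f x + 1 with hφ_def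
  have h1 : Integrable (fun x => f x * Real.log (f x) - f x) ν := hk_int.sub hf_int
  have hφ_int : Integrable φ ν := h1.add (integrable_const 1)
  have hφ_nonneg : ∀ x, 0 ≤ φ x := fun x => ent_nonneg (hf_nonneg x)
  have hφ_eq : ∫ x, φ x ∂ν = k := by
    rw [hφ_def]
    rw [integral_add h1 (integrable_const 1), integral_sub hk_int hf_int, hf_one]
    simp
    exact hk_def.symm
  have hk_nonneg : 0 ≤ k := hφ_eq ▸ integral_nonneg hφ_nonneg
  set u : Z → ℝ := fun x => Real.sqrt ((2 * f x + 4)/3) with hu_def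
  set v : Z → ℝ := fun x => |f x - 1| / u x with hv_def
  have harg_pos : ∀ x, 0 < (2 * f x + 4)/3 := fun x => by have := hf_nonneg x; positivity
  have hu_pos : ∀ x, 0 < u x := fun x => Real.sqrt_pos.mpr (harg_pos x)
  have hu_sq : ∀ x, u x ^ 2 = (2 * f x + 4)/3 := fun x =>
    Real.sq_sqrt (le_of_lt (harg_pos x))
  have huv : ∀ x, u x * v x = |f x - 1| := fun x => by
    rw [hv_def, mul_comm]; exact div_mul_cancel₀ _ (hu_pos x).ne'
  have hu_meas : Measurable u :=
    (((hf_meas.const_mul 2).add_const 4).div_const 3).sqrt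
  have hv_meas : Measurable v := (hf_meas.sub_const 1).abs.div hu_meas
  have hv_sq_le : ∀ x, v x ^ 2 ≤ φ x := fun x => by
    rw [hv_def]
    rw [div_pow, hu_sq, sq_abs, div_le_iff₀ (harg_pos x)]
    have h := key_ineq (hf_nonneg x)
    nlinarith [hφ_nonneg x]
  have hu2_int : Integrable (fun x => u x ^ 2) ν := by
    have : (fun x => u x ^ 2) = fun x => (2 * f x + 4)/3 := funext hu_sq
    rw [this]
    have h2 : Integrable (fun x => 2 * f x + 4) ν :=
      (hf_int.const_mul 2).add (integrable_const 4)
    exact h2.div_const 3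
  have hv2_int : Integrable (fun x => v x ^ 2) ν := by
    refine hφ_int.mono' (hv_meas.pow_const 2).aestronglyMeasurable ?_
    filter_upwards with x
    rw [Real.norm_of_nonneg (sq_nonneg _)]
    exact hv_sq_le x
  have hu_mem : MemLp u (ENNReal.ofReal 2) ν := by
    rw [show ENNReal.ofReal 2 = 2 by norm_num]
    exact (memLp_two_iff_integrable_sq hu_meas.aestronglyMeasurable).mpr hu2_int
  have hv_mem : MemLp v (ENNReal.ofReal 2) ν := by
    rw [show ENNReal.ofReal 2 = 2 by norm_num]
    exact (memLp_two_iff_integrable_sq hv_meas.aestronglyMeasurable).mpr hv2_int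
  have hpq : Real.HolderConjugate 2 2 := ⟨by norm_num, by norm_num, by norm_num⟩
  have hCS := MeasureTheory.integral_mul_le_Lp_mul_Lq_of_nonneg hpq
    (Filter.Eventually.of_forall fun x => (hu_pos x).le)
    (Filter.Eventually.of_forall fun x => div_nonneg (abs_nonneg _) (hu_pos x).le) hu_mem hv_mem
  simp only [Real.rpow_two] at hCS
  have hu2_val : ∫ x, u x ^ 2 ∂ν = 2 := by
    rw [funext hu_sq]
    have h2 : Integrable (fun x => 2 * f x) ν := hf_int.const_mul 2
    rw [integral_div, integral_add h2 (integrable_const 4), integral_const_mul, hf_one]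
    simp
    norm_num
  have hv2_val : ∫ x, v x ^ 2 ∂ν ≤ k := by
    rw [← hφ_eq]
    exact integral_mono hv2_int hφ_int hv_sq_le
  calc ∫ x, |f x - 1| ∂ν = ∫ x, u x * v x ∂ν := by
        simp_rw [huv]
    _ ≤ (∫ x, u x ^ 2 ∂ν) ^ ((1:ℝ)/2) * (∫ x, v x ^ 2 ∂ν) ^ ((1:ℝ)/2) := hCS
    _ = Real.sqrt 2 * Real.sqrt (∫ x, v x ^ 2 ∂ν) := by
        rw [hu2_val, ← Real.sqrt_eq_rpow, ← Real.sqrt_eq_rpow]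
    _ ≤ Real.sqrt 2 * Real.sqrt k :=
        mul_le_mul_of_nonneg_left (Real.sqrt_le_sqrt hv2_val) (Real.sqrt_nonneg 2)
    _ = Real.sqrt (2 * k) := (Real.sqrt_mul (by norm_num) k).symm
    _ = Real.sqrt (2 * ∫ x, Real.log (f x) ∂μ) := by rw [hk_eq]

/-- The Kullback–Leibler divergence `KL(P ‖ Q)`, defined as `∫ log (dP/dQ) dP` when `P ≪ Q`
(and this integral is defined), and `+∞` otherwise. -/
noncomputable def klDiv {α : Type*} [MeasurableSpace α] (P Q : Measure α) : EReal :=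
  if P ≪ Q ∧ Integrable (fun x => Real.log (P.rnDeriv Q x).toReal) P then
    ((∫ x, Real.log (P.rnDeriv Q x).toReal ∂P : ℝ) : EReal)
  else ⊤

/-- Bayes-decision comparison lemma: if `b̂` minimizes the `ν`-risk, `b*` minimizes the `μ`-risk,
and the loss difference `|ℓ(b̂,·) − ℓ(b*,·)|` is bounded by `M`, then the excess `μ`-risk of `b̂`
is at most `M √(2 KL(μ ‖ ν))`.  (When `KL(μ ‖ ν) = ∞` the inequality is trivially true, which is
recorded by the left disjunct.) -/
theorem bayes_decision_comparison
    {Z : Type*} [MeasurableSpace Z] (μ ν : Measure Z)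
    [IsProbabilityMeasure μ] [IsProbabilityMeasure ν]
    {B : Type*} (ℓ : B → Z → ℝ) (hℓ_meas : ∀ b, Measurable (ℓ b))
    (bhat bstar : B)
    (hbhat_int_μ : Integrable (ℓ bhat) μ) (hbhat_int_ν : Integrable (ℓ bhat) ν)
    (hbstar_int_μ : Integrable (ℓ bstar) μ) (hbstar_int_ν : Integrable (ℓ bstar) ν)
    (hbhat : ∀ b : B, ∫ z, ℓ bhat z ∂ν ≤ ∫ z, ℓ b z ∂ν)
    (hbstar : ∀ b : B, ∫ z, ℓ bstar z ∂μ ≤ ∫ z, ℓ b z ∂μ)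
    (M : ℝ) (hM : ∀ z, |ℓ bhat z - ℓ bstar z| ≤ M) :
    klDiv μ ν = ⊤ ∨
      ∫ z, ℓ bhat z ∂μ - ∫ z, ℓ bstar z ∂μ ≤ M * Real.sqrt (2 * (klDiv μ ν).toReal) := by
  simp only [klDiv]
  by_cases hc : μ ≪ ν ∧ Integrable (fun x => Real.log (μ.rnDeriv ν x).toReal) μ
  · right
    rw [if_pos hc]
    obtain ⟨hμν, hint⟩ := hc
    have hZ : Nonempty Z := by
      by_contra h
      have h0 : (Set.univ : Set Z) = ∅ := by
        simp [Set.univ_eq_empty_iff, not_nonempty_iff.mp h]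
      have h1 : μ Set.univ = 1 := measure_univ
      rw [h0, measure_empty] at h1
      exact zero_ne_one h1
    obtain ⟨z0⟩ := hZ
    have hM0 : 0 ≤ M := le_trans (abs_nonneg _) (hM z0)
    set f : Z → ℝ := fun x => (μ.rnDeriv ν x).toReal with hf_def
    set g : Z → ℝ := fun z => ℓ bhat z - ℓ bstar z with hg_def
    have hg_int_μ : Integrable g μ := hbhat_int_μ.sub hbstar_int_μ
    have hg_int_ν : Integrable g ν := hbhat_int_ν.sub hbstar_int_ν
    have hgf_int : Integrable (fun x => f x * g x) ν := by
      simpa [smul_eq_mul] using (integrable_rnDeriv_smul_iff hμν).mpr hg_int_μ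
    have hgf : ∫ x, f x * g x ∂ν = ∫ x, g x ∂μ := by
      simpa [smul_eq_mul] using integral_rnDeriv_smul hμν (f := g)
    have hf_int : Integrable f ν := Measure.integrable_toReal_rnDeriv
    have hfm1_int : Integrable (fun x => |f x - 1|) ν :=
      (hf_int.sub (integrable_const 1)).abs
    have habs_int : Integrable (fun x => M * |f x - 1|) ν := hfm1_int.const_mul M
    have hgμ : ∫ z, g z ∂μ = ∫ z, ℓ bhat z ∂μ - ∫ z, ℓ bstar z ∂μ :=
      integral_sub hbhat_int_μ hbstar_int_μ
    have hgν : ∫ z, g z ∂ν ≤ 0 := by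
      rw [hg_def]
      rw [integral_sub hbhat_int_ν hbstar_int_ν]
      linarith [hbhat bstar]
    have step2 : ∫ z, g z ∂μ - ∫ z, g z ∂ν ≤ M * ∫ x, |f x - 1| ∂ν := by
      rw [← hgf, ← integral_sub hgf_int hg_int_ν, ← integral_const_mul]
      refine integral_mono (hgf_int.sub hg_int_ν) habs_int fun x => ?_
      have h1 : f x * g x - g x = g x * (f x - 1) := by ring
      calc f x * g x - g x = g x * (f x - 1) := h1
        _ ≤ |g x * (f x - 1)| := le_abs_self _
        _ = |g x| * |f x - 1| := abs_mul _ _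
        _ ≤ M * |f x - 1| := mul_le_mul_of_nonneg_right (hM x) (abs_nonneg _)
    have step3 := pinsker μ ν hμν hint
    have hfinal : ∫ z, ℓ bhat z ∂μ - ∫ z, ℓ bstar z ∂μ ≤
        M * Real.sqrt (2 * ∫ x, Real.log (f x) ∂μ) := by
      have h4 : M * ∫ x, |f x - 1| ∂ν ≤ M * Real.sqrt (2 * ∫ x, Real.log (f x) ∂μ) :=
        mul_le_mul_of_nonneg_left step3 hM0
      linarith [step2, hgμ.symm ▸ le_refl (∫ z, g z ∂μ)]
    rw [EReal.toReal_coe]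
    exact hfinal
  · left
    rw [if_neg hc]
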